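/- Let ω be a fixed angle with 0 < ω < π. Let q = (s,t) with t > 0, and define the points b = (t·cot(ω) − √(s²·sin²(ω) + t²)·csc(ω), 0) and c = (−t·cot(ω) + √(s²·sin²(ω) + t²)·csc(ω), 0) on the x-axis. Then the origin (0,0) is the midpoint of the segment [b,c], and the angle at q between b and c equals ω, i.e., ∠(b, q, c) = ω. -/

import Mathlib

open Real EuclideanGeometry

/-- The point of the Euclidean plane with coordinates `x` and `y`. -/
def pt (x y : ℝ) : EuclideanSpace ℝ (Fin 2) := WithLp.toLp 2 ![x, y]

theorem wedge_apex_fixed_midpoint_origin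
    (ω s t : ℝ) (hω₀ : 0 < ω) (hω₁ : ω < π) (ht : 0 < t) :
    (let q := pt s t
     let b := pt (t * Real.cot ω - Real.sqrt (s ^ 2 * Real.sin ω ^ 2 + t ^ 2) * (Real.sin ω)⁻¹) 0
     let c := pt (-(t * Real.cot ω) + Real.sqrt (s ^ 2 * Real.sin ω ^ 2 + t ^ 2) * (Real.sin ω)⁻¹) 0
     midpoint ℝ b c = pt 0 0 ∧ EuclideanGeometry.angle b q c = ω) := by
  intro q b c
  have hS : 0 < Real.sin ω := Real.sin_pos_of_pos_of_lt_pi hω₀ hω₁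
  have hpyth : Real.sin ω ^ 2 + Real.cos ω ^ 2 = 1 := Real.sin_sq_add_cos_sq ω
  have hC1 : Real.cos ω < 1 := by nlinarith
  set S := Real.sin ω with hSdef
  set C := Real.cos ω with hCdef
  set R := Real.sqrt (s ^ 2 * S ^ 2 + t ^ 2) with hRdef
  have hR0 : 0 ≤ R := Real.sqrt_nonneg _
  have hR2 : R ^ 2 = s ^ 2 * S ^ 2 + t ^ 2 := Real.sq_sqrt (by positivity)
  have hRt : t ≤ R := by nlinarith
  have hv : 0 < R - t * C := by nlinarith
  have hcot : Real.cot ω = C / S := Real.cot_eq_cos_div_sin ω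
  constructor
  · ext i
    fin_cases i <;>
      simp [pt, b, c, midpoint_eq_smul_add, PiLp.smul_apply, PiLp.add_apply] <;> ring
  · have hang : EuclideanGeometry.angle b q c = InnerProductGeometry.angle (b - q) (c - q) := rfl
    rw [hang, InnerProductGeometry.angle]
    have hxb : (b - q) 0 = (t * C - R) / S - s := by
      simp [pt, b, q, hcot]; ring
    have hyb : (b - q) 1 = -t := by simp [pt, b, q]
    have hxc : (c - q) 0 = -((t * C - R) / S) - s := by
      simp [pt, c, q, hcot]; ring
    have hyc : (c - q) 1 = -t := by simp [pt, c, q]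
    have hinner : (inner ℝ (b - q) (c - q) : ℝ) = 2 * t * C * (R - t * C) / S ^ 2 := by
      rw [PiLp.inner_apply, Fin.sum_univ_two]
      simp only [RCLike.inner_apply, conj_trivial, hxb, hyb, hxc, hyc]
      field_simp
      linear_combination (-1) * hR2 + t^2 * hpyth
    have key : ((t*C - R - S*s)^2 + t^2*S^2) * ((R - t*C - S*s)^2 + t^2*S^2)
        = 4*t^2*(R - t*C)^2 := by
      linear_combination (4*(R-t*C)^2 - 4*(R-t*C)*R - (-(R^2 - s^2*S^2 - t^2) + t^2*(S^2+C^2-1))) * hR2 + (4*(R-t*C)*R*t^2 + t^2*(-(R^2-s^2*S^2-t^2)+t^2*(S^2+C^2-1))) * hpyth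
    have hnb : ‖b - q‖ = Real.sqrt (((t * C - R) / S - s) ^ 2 + t ^ 2) := by
      rw [EuclideanSpace.norm_eq, Fin.sum_univ_two, hxb, hyb]
      congr 1
      simp [Real.norm_eq_abs, sq_abs]
    have hnc : ‖c - q‖ = Real.sqrt ((-((t * C - R) / S) - s) ^ 2 + t ^ 2) := by
      rw [EuclideanSpace.norm_eq, Fin.sum_univ_two, hxc, hyc]
      congr 1
      simp [Real.norm_eq_abs, sq_abs]
    have hprod : ‖b - q‖ * ‖c - q‖ = 2 * t * (R - t * C) / S ^ 2 := by
      rw [hnb, hnc, ← Real.sqrt_mul (by positivity)]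
      rw [show (((t * C - R) / S - s) ^ 2 + t ^ 2) * ((-((t * C - R) / S) - s) ^ 2 + t ^ 2)
          = (2 * t * (R - t * C) / S ^ 2) ^ 2 by
        field_simp
        linear_combination key]
      exact Real.sqrt_sq (by positivity)
    rw [hinner, hprod]
    have hd : (2 * t * (R - t * C) / S ^ 2) ≠ 0 := by positivity
    rw [show 2 * t * C * (R - t * C) / S ^ 2 / (2 * t * (R - t * C) / S ^ 2) = C by
      field_simp]
    exact Real.arccos_cos hω₀.le hω₁.le
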